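/- A particle entering the square [-1,1]² vertically downward at abscissa x₀ with 2^{-k} < |x₀| < 2^{-k+1} (k ≥ 1) and reflecting specularly off the arcs p'_k (on parabola y = 2^{k-2}x² + 1 - 2^{-k}) and then p'_{k+1} (on parabola y = 2^{k-1}x² + 1 - 2^{-k-1}) exits the upper half construction moving downward along the vertical line x = x₀/2; then by symmetry through the x-axis (arcs q_k, q_{k+1}), it exits the whole body moving downward along the original line x = x₀. Prove the first part: after the two reflections in the upper half, the velocity is (0,-1) and the abscissa is x₀/2. -/

import Mathlib

/-- Specular reflection of a velocity `v` at a point with unit normal `n`. -/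
def reflect (v n : ℝ × ℝ) : ℝ × ℝ := v - (2 * (v.1 * n.1 + v.2 * n.2)) • n

/-- The unit normal to the graph of a function with slope `s`. -/
noncomputable def unitNormal (s : ℝ) : ℝ × ℝ :=
  (-s / Real.sqrt (1 + s ^ 2), 1 / Real.sqrt (1 + s ^ 2))

lemma reflect_reflect (v n : ℝ × ℝ) (h : n.1 ^ 2 + n.2 ^ 2 = 1) :
    reflect (reflect v n) n = v := by
  simp only [reflect, Prod.ext_iff, Prod.fst_sub, Prod.snd_sub, Prod.smul_fst, Prod.smul_snd,
    smul_eq_mul]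
  constructor
  · linear_combination (4 * (v.1 * n.1 + v.2 * n.2) * n.1) * h
  · linear_combination (4 * (v.1 * n.1 + v.2 * n.2) * n.2) * h

theorem two_reflections_upper_half (k : ℕ) (hk : 1 ≤ k) (x₀ : ℝ)
    (h1 : (2 : ℝ) ^ (-(k : ℤ)) < |x₀|) (h2 : |x₀| < (2 : ℝ) ^ (-(k : ℤ) + 1)) :
    let A : ℝ × ℝ := (x₀, (2 : ℝ) ^ ((k : ℤ) - 2) * x₀ ^ 2 + 1 - (2 : ℝ) ^ (-(k : ℤ)))
    let v₁ : ℝ × ℝ := reflect (0, -1) (unitNormal ((2 : ℝ) ^ ((k : ℤ) - 1) * x₀))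
    ∃ t : ℝ, 0 < t ∧
      (A + t • v₁).2 = (2 : ℝ) ^ ((k : ℤ) - 1) * (A + t • v₁).1 ^ 2 + 1
        - (2 : ℝ) ^ (-(k : ℤ) - 1) ∧
      (A + t • v₁).1 = x₀ / 2 ∧
      reflect v₁ (unitNormal ((2 : ℝ) ^ (k : ℤ) * (A + t • v₁).1)) = ((0 : ℝ), (-1 : ℝ)) := by
  intro A v₁
  set c : ℝ := (2 : ℝ) ^ (k : ℤ) with hc
  have hc0 : (0 : ℝ) < c := zpow_pos two_pos _
  have hcne : c ≠ 0 := ne_of_gt hc0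
  set s : ℝ := (2 : ℝ) ^ ((k : ℤ) - 1) * x₀ with hs
  set r : ℝ := Real.sqrt (1 + s ^ 2) with hrdef
  have hr0 : 0 < r := Real.sqrt_pos.mpr (by positivity)
  have hrne : r ≠ 0 := ne_of_gt hr0
  have hr : r ^ 2 = 1 + s ^ 2 := Real.sq_sqrt (by positivity)
  -- power rewrites
  have e1 : (2 : ℝ) ^ ((k : ℤ) - 1) = c / 2 := by
    rw [zpow_sub₀ (two_ne_zero), hc]; norm_num
  have e2 : (2 : ℝ) ^ ((k : ℤ) - 2) = c / 4 := by
    rw [zpow_sub₀ (two_ne_zero), hc]; norm_num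
  have e3 : (2 : ℝ) ^ (-(k : ℤ)) = 1 / c := by
    rw [zpow_neg, hc]; exact inv_eq_one_div c
  have e4 : (2 : ℝ) ^ (-(k : ℤ) - 1) = 1 / (2 * c) := by
    rw [zpow_sub₀ (two_ne_zero), zpow_neg, hc]
    field_simp
  have hsc : s = c / 2 * x₀ := by rw [hs, e1]
  -- explicit form of v₁
  have hv1 : v₁ = (-(2 * s) / r ^ 2, -1 + 2 / r ^ 2) := by
    simp only [v₁, reflect, unitNormal, ← hs, ← hrdef, Prod.ext_iff, Prod.fst_sub, Prod.snd_sub,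
      Prod.smul_fst, Prod.smul_snd, smul_eq_mul]
    constructor
    · field_simp
      ring
    · field_simp; ring
  have hu0 : (1 : ℝ) + (c / 2 * x₀) ^ 2 ≠ 0 := by positivity
  have hv1' : v₁ = (-(2 * (c / 2 * x₀)) / (1 + (c / 2 * x₀) ^ 2),
      -1 + 2 / (1 + (c / 2 * x₀) ^ 2)) := by rw [hv1, hr, hsc]
  refine ⟨(1 + (c / 2 * x₀) ^ 2) / (2 * c), by positivity, ?_, ?_, ?_⟩
  · -- lands on second parabola
    simp only [Prod.snd_add, Prod.fst_add, Prod.smul_snd, Prod.smul_fst, smul_eq_mul, hv1', A,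
      e1, e2, e3, e4]
    field_simp
    ring
  · simp only [Prod.fst_add, Prod.smul_fst, smul_eq_mul, hv1', A]
    field_simp
    ring
  · have hx : (A + ((1 + (c / 2 * x₀) ^ 2) / (2 * c)) • v₁).1 = x₀ / 2 := by
      simp only [Prod.fst_add, Prod.smul_fst, smul_eq_mul, hv1', A]
      field_simp
      ring
    rw [hx]
    have hss : (2 : ℝ) ^ (k : ℤ) * (x₀ / 2) = s := by rw [← hc, hsc]; ring
    rw [hss]
    show reflect (reflect (0, -1) (unitNormal s)) (unitNormal s) = _
    apply reflect_reflect
    simp only [unitNormal, ← hrdef]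
    field_simp
    have hr' : r ^ 2 = 1 + ((2 : ℝ) ^ ((k : ℤ) - 1) * x₀) ^ 2 := by rw [hr, hs]
    rw [mul_pow] at hr'
    linarith
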